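/- Let C be either the singleton class {⟨ω,<⟩} or the class of all finite linear orders. Then for every bimodal formula φ: φ is satisfied in some model based on a product of a member of C with a difference frame if and only if the formula □₁⁺□₀⁺(◇₀⊤ → □₁◇₀⊤) ∧ φ is satisfied in some model based on a decreasing 2-frame whose horizontal frame is in C and whose vertical frames are all difference frames (here □ᵢ⁺ψ := ψ ∧ □ᵢψ). -/

import Mathlib

namespace HK

/-! ## Bimodal formulas -/

/-- Bimodal formulas: `φ ::= P | ¬φ | φ∧ψ | ◇₀φ | ◇₁φ`. -/
inductive BForm : Type
  | var : ℕ → BForm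
  | neg : BForm → BForm
  | and : BForm → BForm → BForm
  | dia0 : BForm → BForm
  | dia1 : BForm → BForm

namespace BForm

def imp (φ ψ : BForm) : BForm := neg (and φ (neg ψ))
def bot : BForm := and (var 0) (neg (var 0))
def top : BForm := neg bot
def box0 (φ : BForm) : BForm := neg (dia0 (neg φ))
def box1 (φ : BForm) : BForm := neg (dia1 (neg φ))
/-- `□₀⁺φ := φ ∧ □₀φ` -/
def boxP0 (φ : BForm) : BForm := and φ (box0 φ)
/-- `□₁⁺φ := φ ∧ □₁φ` -/
def boxP1 (φ : BForm) : BForm := and φ (box1 φ)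

/-- Modal nesting depth. -/
def depth : BForm → ℕ
  | var _ => 0
  | neg φ => depth φ
  | and φ ψ => max (depth φ) (depth ψ)
  | dia0 φ => depth φ + 1
  | dia1 φ => depth φ + 1

/-- The propositional variable `k` occurs in the formula. -/
def Occurs (k : ℕ) : BForm → Prop
  | var n => k = n
  | neg φ => Occurs k φ
  | and φ ψ => Occurs k φ ∨ Occurs k ψ
  | dia0 φ => Occurs k φ
  | dia1 φ => Occurs k φ

/-- The formula uses only the modal operator `◇₀`. -/
def OnlyDia0 : BForm → Prop
  | var _ => True
  | neg φ => OnlyDia0 φ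
  | and φ ψ => OnlyDia0 φ ∧ OnlyDia0 ψ
  | dia0 φ => OnlyDia0 φ
  | dia1 _ => False

/-- The formula uses only the modal operator `◇₁`. -/
def OnlyDia1 : BForm → Prop
  | var _ => True
  | neg φ => OnlyDia1 φ
  | and φ ψ => OnlyDia1 φ ∧ OnlyDia1 ψ
  | dia0 _ => False
  | dia1 φ => OnlyDia1 φ

/-- Relativisation `φ^D` of each diamond to the variable `d`:
each subformula `◇ᵢψ` is replaced by `◇ᵢ(D ∧ ψ^D)`. -/
def relativize (d : ℕ) : BForm → BForm
  | var n => var n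
  | neg φ => neg (relativize d φ)
  | and φ ψ => and (relativize d φ) (relativize d ψ)
  | dia0 φ => dia0 (and (var d) (relativize d φ))
  | dia1 φ => dia1 (and (var d) (relativize d φ))

/-- `□₀^k φ` -/
def iterBox0 : ℕ → BForm → BForm
  | 0, φ => φ
  | n+1, φ => box0 (iterBox0 n φ)

/-- `□₁^k φ` -/
def iterBox1 : ℕ → BForm → BForm
  | 0, φ => φ
  | n+1, φ => box1 (iterBox1 n φ)

/-- `□₀^{≤n} φ := ⋀_{k ≤ n} □₀^k φ` -/
def boxLe0 : ℕ → BForm → BForm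
  | 0, φ => φ
  | n+1, φ => and (boxLe0 n φ) (iterBox0 (n+1) φ)

/-- `□₁^{≤n} φ := ⋀_{k ≤ n} □₁^k φ` -/
def boxLe1 : ℕ → BForm → BForm
  | 0, φ => φ
  | n+1, φ => and (boxLe1 n φ) (iterBox1 (n+1) φ)

/-- Uniform substitution. -/
def subst (s : ℕ → BForm) : BForm → BForm
  | var n => s n
  | neg φ => neg (subst s φ)
  | and φ ψ => and (subst s φ) (subst s ψ)
  | dia0 φ => dia0 (subst s φ)
  | dia1 φ => dia1 (subst s φ)

end BForm

/-- Kripke truth over a 2-frame `⟨W, R0, R1⟩` with valuation `val`. -/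
def BSat {W : Type} (R0 R1 : W → W → Prop) (val : ℕ → W → Prop) : W → BForm → Prop
  | w, .var n => val n w
  | w, .neg φ => ¬ BSat R0 R1 val w φ
  | w, .and φ ψ => BSat R0 R1 val w φ ∧ BSat R0 R1 val w ψ
  | w, .dia0 φ => ∃ v, R0 w v ∧ BSat R0 R1 val v φ
  | w, .dia1 φ => ∃ v, R1 w v ∧ BSat R0 R1 val v φ

/-! ## Frames -/

/-- A (unimodal) frame: a nonempty set with a binary relation. -/
structure Frame : Type 1 where
  W : Type
  R : W → W → Prop
  ne : Nonempty W

/-- A 2-frame: a nonempty set with two binary relations. -/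
structure Frame2 : Type 1 where
  W : Type
  R0 : W → W → Prop
  R1 : W → W → Prop
  ne : Nonempty W

/-- Validity of a bimodal formula in a 2-frame. -/
def Frame2.Valid (F : Frame2) (φ : BForm) : Prop :=
  ∀ (val : ℕ → F.W → Prop) (w : F.W), BSat F.R0 F.R1 val w φ

/-- Satisfaction of a bimodal formula in some model based on the 2-frame. -/
def Frame2.Sat (F : Frame2) (φ : BForm) : Prop :=
  ∃ (val : ℕ → F.W → Prop) (w : F.W), BSat F.R0 F.R1 val w φ

/-- Horizontal relation of a product frame. -/
def prodR0 {A B : Type} (R : A → A → Prop) : A × B → A × B → Prop :=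
  fun p q => R p.1 q.1 ∧ p.2 = q.2

/-- Vertical relation of a product frame. -/
def prodR1 {A B : Type} (S : B → B → Prop) : A × B → A × B → Prop :=
  fun p q => p.1 = q.1 ∧ S p.2 q.2

/-- `φ` is satisfied in some model based on the product frame `⟨A,R⟩ × ⟨B,S⟩`. -/
def ProdSat {A B : Type} (R : A → A → Prop) (S : B → B → Prop) (φ : BForm) : Prop :=
  ∃ (val : ℕ → A × B → Prop) (w : A × B), BSat (prodR0 R) (prodR1 S) val w φ

/-- `φ` is valid in the product frame `⟨A,R⟩ × ⟨B,S⟩`. -/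
def ProdValid {A B : Type} (R : A → A → Prop) (S : B → B → Prop) (φ : BForm) : Prop :=
  ∀ (val : ℕ → A × B → Prop) (w : A × B), BSat (prodR0 R) (prodR1 S) val w φ

/-- The product 2-frame of two frames. -/
def prodFrame2 (A B : Type) [Nonempty A] [Nonempty B]
    (R : A → A → Prop) (S : B → B → Prop) : Frame2 :=
  ⟨A × B, prodR0 R, prodR1 S, inferInstance⟩

/-- Linear order: irreflexive, transitive and trichotomous. -/
def IsLin {T : Type} (R : T → T → Prop) : Prop :=
  (∀ x, ¬ R x x) ∧ (∀ x y z, R x y → R y z → R x z) ∧ (∀ x y, R x y ∨ x = y ∨ R y x)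

/-- Weak order: transitive and weakly connected. -/
def WeakOrd {T : Type} (R : T → T → Prop) : Prop :=
  (∀ x y z, R x y → R y z → R x z) ∧ (∀ x y z, R x y → R x z → y = z ∨ R y z ∨ R z y)

/-- Modal discreteness. -/
def ModallyDiscrete {T : Type} (R : T → T → Prop) : Prop :=
  ¬ ∃ (x : ℕ → T) (xω : T), (∀ i, R (x i) (x (i+1))) ∧ (∀ i, x i ≠ x (i+1)) ∧
      (∀ i, R (x i) xω) ∧ (∀ i, ¬ R xω (x i))

/-- No infinite ascending chains of distinct points. -/
def Noetherian {T : Type} (R : T → T → Prop) : Prop :=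
  ¬ ∃ x : ℕ → T, (∀ i, R (x i) (x (i+1))) ∧ (∀ i, x i ≠ x (i+1))

/-- The frame is (isomorphic to) `⟨ω,<⟩`. -/
def IsOmegaFrame (F : Frame) : Prop :=
  ∃ e : F.W ≃ ℕ, ∀ a b, F.R a b ↔ e a < e b

/-- The frame is a finite linear order. -/
def IsFinLinFrame (F : Frame) : Prop := Finite F.W ∧ IsLin F.R

/-- `F` contains an `⟨ω+1,>⟩`-type chain: distinct points `x₀,…,x_n,…,x_ω` with
`x_n R x_m` iff `n > m` (for `n ≠ m`). -/
def HasOmegaPlusOneChain (F : Frame) : Prop :=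
  ∃ (x : ℕ → F.W) (xω : F.W), Function.Injective x ∧ (∀ n, x n ≠ xω) ∧
    (∀ n m, n ≠ m → (F.R (x n) (x m) ↔ m < n)) ∧
    (∀ n, F.R xω (x n)) ∧ (∀ n, ¬ F.R (x n) xω)

/-! ## Two-dimensional (expanding/decreasing) 2-frames `H_{F,Ḡ}` -/

/-- A 2-frame `H_{F,Ḡ}` built from a horizontal frame `⟨H,R⟩` and, for each `x : H`,
a vertical frame `G_x = ⟨D x, S x⟩` carved out of a common ambient type `V`. -/
structure TwoFrame : Type 1 where
  H : Type
  R : H → H → Prop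
  Hne : Nonempty H
  V : Type
  D : H → Set V
  S : H → V → V → Prop
  Dne : ∀ x, (D x).Nonempty

namespace TwoFrame

/-- The horizontal frame. -/
def horiz (T : TwoFrame) : Frame := ⟨T.H, T.R, T.Hne⟩

/-- The vertical frame `G_x` at `x`. -/
def fiber (T : TwoFrame) (x : T.H) : Frame :=
  ⟨{a : T.V // a ∈ T.D x}, fun a b => T.S x a.1 b.1,
    Exists.elim (T.Dne x) (fun a ha => ⟨⟨a, ha⟩⟩)⟩

/-- The worlds `{⟨u,v⟩ : u ∈ H, v ∈ D u}`. -/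
def Worlds (T : TwoFrame) : Type := {p : T.H × T.V // p.2 ∈ T.D p.1}

/-- Horizontal relation of `H_{F,Ḡ}`. -/
def Rh (T : TwoFrame) : T.Worlds → T.Worlds → Prop :=
  fun p q => T.R p.1.1 q.1.1 ∧ p.1.2 = q.1.2

/-- Vertical relation of `H_{F,Ḡ}`. -/
def Rv (T : TwoFrame) : T.Worlds → T.Worlds → Prop :=
  fun p q => p.1.1 = q.1.1 ∧ T.S p.1.1 p.1.2 q.1.2

/-- `φ` is satisfied in some model based on `H_{F,Ḡ}`. -/
def Sat (T : TwoFrame) (φ : BForm) : Prop :=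
  ∃ (val : ℕ → T.Worlds → Prop) (w : T.Worlds), BSat T.Rh T.Rv val w φ

/-- Decreasing 2-frame: `G_y` is a subframe of `G_x` whenever `x R y`. -/
def Decreasing (T : TwoFrame) : Prop :=
  ∀ x y, T.R x y → T.D y ⊆ T.D x ∧ ∀ a ∈ T.D y, ∀ b ∈ T.D y, (T.S y a b ↔ T.S x a b)

/-- Expanding 2-frame: `G_x` is a subframe of `G_y` whenever `x R y`. -/
def Expanding (T : TwoFrame) : Prop :=
  ∀ x y, T.R x y → T.D x ⊆ T.D y ∧ ∀ a ∈ T.D x, ∀ b ∈ T.D x, (T.S x a b ↔ T.S y a b)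

/-- All vertical frames are difference frames. -/
def DiffFibers (T : TwoFrame) : Prop :=
  ∀ x, ∀ a ∈ T.D x, ∀ b ∈ T.D x, (T.S x a b ↔ a ≠ b)

end TwoFrame

/-- `φ` is satisfied in some model based on a product of a member of `C`
with a difference frame. -/
def ProdDiffSat (C : Frame → Prop) (φ : BForm) : Prop :=
  ∃ F : Frame, C F ∧ ∃ D : Type, Nonempty D ∧ ProdSat F.R (fun a b : D => a ≠ b) φ

/-- `φ` is satisfied in some model based on a decreasing 2-frame with horizontal
frame in `C` and all vertical frames difference frames. -/
def DecDiffSat (C : Frame → Prop) (φ : BForm) : Prop :=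
  ∃ T : TwoFrame, C T.horiz ∧ T.Decreasing ∧ T.DiffFibers ∧ T.Sat φ

/-- `φ` is satisfied in some model based on an expanding 2-frame with horizontal
frame in `C` and all vertical frames difference frames. -/
def ExpDiffSat (C : Frame → Prop) (φ : BForm) : Prop :=
  ∃ T : TwoFrame, C T.horiz ∧ T.Expanding ∧ T.DiffFibers ∧ T.Sat φ

/-- `φ` is satisfied in some model based on a product of a member of `C0` with a
member of `C1`. -/
def ProdClassSat (C0 C1 : Frame → Prop) (φ : BForm) : Prop :=
  ∃ F0, C0 F0 ∧ ∃ F1, C1 F1 ∧ ProdSat F0.R F1.R φ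

/-- `φ` is satisfied in some model based on a decreasing 2-frame with horizontal
frame in `C0` and all vertical frames in `C1`. -/
def DecClassSat (C0 C1 : Frame → Prop) (φ : BForm) : Prop :=
  ∃ T : TwoFrame, C0 T.horiz ∧ (∀ x, C1 (T.fiber x)) ∧ T.Decreasing ∧ T.Sat φ

/-- `φ` is satisfied in some model based on an expanding 2-frame with horizontal
frame in `C0` and all vertical frames in `C1`. -/
def ExpClassSat (C0 C1 : Frame → Prop) (φ : BForm) : Prop :=
  ∃ T : TwoFrame, C0 T.horiz ∧ (∀ x, C1 (T.fiber x)) ∧ T.Expanding ∧ T.Sat φ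

/-- Satisfiability over products of `⟨ω,<⟩` with difference frames. -/
def OmegaDiffSat (φ : BForm) : Prop :=
  ∃ D : Type, Nonempty D ∧ ProdSat (fun m n : ℕ => m < n) (fun a b : D => a ≠ b) φ

/-- Satisfiability over products of finite linear orders with difference frames. -/
def FinLinDiffSat (φ : BForm) : Prop :=
  ∃ (T : Type) (R : T → T → Prop), Finite T ∧ IsLin R ∧
    ∃ D : Type, Nonempty D ∧ ProdSat R (fun a b : D => a ≠ b) φ

/-! ## Bimodal logics -/

/-- Propositional tautology (diamond formulas treated as atoms). -/
def IsTaut (φ : BForm) : Prop :=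
  ∀ v : BForm → Prop, (∀ ψ, v (BForm.neg ψ) ↔ ¬ v ψ) →
    (∀ ψ χ, v (BForm.and ψ χ) ↔ v ψ ∧ v χ) → v φ

/-- Normal bimodal logic. -/
structure IsLogic (L : Set BForm) : Prop where
  taut : ∀ φ, IsTaut φ → φ ∈ L
  K0 : BForm.imp (BForm.box0 (BForm.imp (BForm.var 0) (BForm.var 1)))
        (BForm.imp (BForm.box0 (BForm.var 0)) (BForm.box0 (BForm.var 1))) ∈ L
  K1 : BForm.imp (BForm.box1 (BForm.imp (BForm.var 0) (BForm.var 1)))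
        (BForm.imp (BForm.box1 (BForm.var 0)) (BForm.box1 (BForm.var 1))) ∈ L
  mp : ∀ φ ψ, BForm.imp φ ψ ∈ L → φ ∈ L → ψ ∈ L
  subst : ∀ φ s, φ ∈ L → BForm.subst s φ ∈ L
  nec0 : ∀ φ, φ ∈ L → BForm.box0 φ ∈ L
  nec1 : ∀ φ, φ ∈ L → BForm.box1 φ ∈ L

/-- Validity of a (◇₀-)formula in a unimodal frame `⟨W,R⟩`. -/
def UValid0 {W : Type} (R : W → W → Prop) (φ : BForm) : Prop :=
  ∀ (val : ℕ → W → Prop) (w : W), BSat R (fun _ _ => False) val w φ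

/-- Validity of a (◇₁-)formula in a unimodal frame `⟨W,S⟩`. -/
def UValid1 {W : Type} (S : W → W → Prop) (φ : BForm) : Prop :=
  ∀ (val : ℕ → W → Prop) (w : W), BSat (fun _ _ => False) S val w φ

/-- `K4.3`: the unimodal logic (in `◇₀`) of all linear orders. -/
def K43 : Set BForm :=
  {φ | φ.OnlyDia0 ∧ ∀ (T : Type) (R : T → T → Prop), Nonempty T → IsLin R → UValid0 R φ}

/-- `Diff`: the unimodal logic (in `◇₁`) of all difference frames. -/
def DiffLogic : Set BForm :=
  {φ | φ.OnlyDia1 ∧ ∀ (D : Type), Nonempty D → UValid1 (fun a b : D => a ≠ b) φ}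

/-- `Log⟨ω,<⟩`: the unimodal logic (in `◇₀`) of the frame `⟨ω,<⟩`. -/
def LogOmega : Set BForm :=
  {φ | φ.OnlyDia0 ∧ UValid0 (fun m n : ℕ => m < n) φ}

/-- `GL.3`: the unimodal logic (in `◇₀`) of all Noetherian irreflexive linear orders. -/
def GL3 : Set BForm :=
  {φ | φ.OnlyDia0 ∧
    ∀ (T : Type) (R : T → T → Prop), Nonempty T → IsLin R → Noetherian R → UValid0 R φ}

/-- `DisK4.3`: the unimodal logic (in `◇₀`) of all modally discrete weak orders. -/
def DisK43 : Set BForm :=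
  {φ | φ.OnlyDia0 ∧
    ∀ (T : Type) (R : T → T → Prop), Nonempty T → WeakOrd R → ModallyDiscrete R → UValid0 R φ}

def commAx1 : BForm :=
  BForm.imp (BForm.box1 (BForm.box0 (BForm.var 0))) (BForm.box0 (BForm.box1 (BForm.var 0)))
def commAx2 : BForm :=
  BForm.imp (BForm.box0 (BForm.box1 (BForm.var 0))) (BForm.box1 (BForm.box0 (BForm.var 0)))
def commAx3 : BForm :=
  BForm.imp (BForm.dia0 (BForm.box1 (BForm.var 0))) (BForm.box1 (BForm.dia0 (BForm.var 0)))

/-- The commutator `[L0,L1]`: the smallest bimodal logic containing `L0`, `L1` (and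
hence their fusion) together with the commutativity/confluence axioms. -/
def Commutator (L0 L1 : Set BForm) : Set BForm :=
  ⋂₀ {L : Set BForm | IsLogic L ∧ L0 ⊆ L ∧ L1 ⊆ L ∧
      commAx1 ∈ L ∧ commAx2 ∈ L ∧ commAx3 ∈ L}

/-- The product logic `L0 × L1`: the logic of all products of a frame for `L0`
with a frame for `L1`. -/
def ProdLogic (L0 L1 : Set BForm) : Set BForm :=
  {φ | ∀ (A B : Type), Nonempty A → Nonempty B → ∀ (R : A → A → Prop) (S : B → B → Prop),
      (∀ ψ ∈ L0, UValid0 R ψ) → (∀ ψ ∈ L1, UValid1 S ψ) → ProdValid R S φ}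

/-- The logic of a class of 2-frames. -/
def LogOf (C : Frame2 → Prop) : Set BForm := {φ | ∀ F, C F → F.Valid φ}

/-- Kripke completeness of a bimodal logic. -/
def KripkeComplete (L : Set BForm) : Prop := ∃ C : Frame2 → Prop, L = LogOf C

/-- `L`-satisfiability: `φ` is satisfied in some model `M` with `M ⊨ L`. -/
def LSat (L : Set BForm) (φ : BForm) : Prop :=
  ∃ (W : Type) (_ : Nonempty W) (R0 R1 : W → W → Prop) (val : ℕ → W → Prop),
    (∀ ψ ∈ L, ∀ w, BSat R0 R1 val w ψ) ∧ ∃ w, BSat R0 R1 val w φ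

/-! ## One-variable first-order temporal logic with counting (FOLTL≠) -/

/-- FOLTL≠-formulas: `φ ::= P(x) | ¬φ | φ∧ψ | ◇_F φ | ∃≠x φ`. -/
inductive TForm : Type
  | atom : ℕ → TForm
  | neg : TForm → TForm
  | and : TForm → TForm → TForm
  | diaF : TForm → TForm
  | exNe : TForm → TForm

/-- Truth of an FOLTL≠-formula in a first-order temporal model based on the
timeline `⟨T,lt⟩` with domains `D` and interpretation `I`. -/
def TSat {T U : Type} (lt : T → T → Prop) (D : T → Set U) (I : ℕ → T → U → Prop) :
    T → U → TForm → Prop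
  | t, a, .atom n => I n t a
  | t, a, .neg φ => ¬ TSat lt D I t a φ
  | t, a, .and φ ψ => TSat lt D I t a φ ∧ TSat lt D I t a ψ
  | t, a, .diaF φ => ∃ t', lt t t' ∧ a ∈ D t' ∧ TSat lt D I t' a φ
  | t, a, .exNe φ => ∃ b, b ∈ D t ∧ b ≠ a ∧ TSat lt D I t b φ

/-- The standard translation `⋆` from FOLTL≠-formulas to bimodal formulas. -/
def TForm.star : TForm → BForm
  | .atom n => .var n
  | .neg φ => .neg (TForm.star φ)
  | .and φ ψ => .and (TForm.star φ) (TForm.star ψ)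
  | .diaF φ => .dia0 (TForm.star φ)
  | .exNe φ => .dia1 (TForm.star φ)

/-- Satisfiability in constant domain models over the timeline `⟨T,lt⟩`. -/
def FOLTLConstSat {T : Type} (lt : T → T → Prop) (φ : TForm) : Prop :=
  ∃ (U : Type) (I : ℕ → T → U → Prop) (t : T) (a : U),
    TSat lt (fun _ => (Set.univ : Set U)) I t a φ

/-- Satisfiability in decreasing domain models over the timeline `⟨T,lt⟩`. -/
def FOLTLDecSat {T : Type} (lt : T → T → Prop) (φ : TForm) : Prop :=
  ∃ (U : Type) (D : T → Set U), (∀ t, (D t).Nonempty) ∧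
    (∀ t t', lt t t' → D t' ⊆ D t) ∧
    ∃ (I : ℕ → T → U → Prop) (t : T) (a : U), a ∈ D t ∧ TSat lt D I t a φ

/-- Satisfiability in expanding domain models over the timeline `⟨T,lt⟩`. -/
def FOLTLExpSat {T : Type} (lt : T → T → Prop) (φ : TForm) : Prop :=
  ∃ (U : Type) (D : T → Set U), (∀ t, (D t).Nonempty) ∧
    (∀ t t', lt t t' → D t ⊆ D t') ∧
    ∃ (I : ℕ → T → U → Prop) (t : T) (a : U), a ∈ D t ∧ TSat lt D I t a φ

/-- Satisfiability in constant domain models over a class `C` of timelines. -/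
def FOLTLConstSatC (C : Frame → Prop) (φ : TForm) : Prop :=
  ∃ F, C F ∧ FOLTLConstSat F.R φ

/-- Satisfiability in decreasing domain models over a class `C` of timelines. -/
def FOLTLDecSatC (C : Frame → Prop) (φ : TForm) : Prop :=
  ∃ F, C F ∧ FOLTLDecSat F.R φ

/-- Satisfiability in expanding domain models over a class `C` of timelines. -/
def FOLTLExpSatC (C : Frame → Prop) (φ : TForm) : Prop :=
  ∃ F, C F ∧ FOLTLExpSat F.R φ

/-- The class of all linear orders. -/
def AllLin : Frame → Prop := fun F => IsLin F.R

/-- The class of all finite linear orders. -/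
def AllFinLin : Frame → Prop := IsFinLinFrame

/-! ## Gödel numbering -/

/-- A fixed effective Gödel numbering of bimodal formulas. -/
def encodeB : BForm → ℕ
  | .var n => Nat.pair 0 n
  | .neg φ => Nat.pair 1 (encodeB φ)
  | .and φ ψ => Nat.pair 2 (Nat.pair (encodeB φ) (encodeB ψ))
  | .dia0 φ => Nat.pair 3 (encodeB φ)
  | .dia1 φ => Nat.pair 4 (encodeB φ)

/-- A fixed effective Gödel numbering of FOLTL≠-formulas. -/
def encodeT : TForm → ℕ
  | .atom n => Nat.pair 0 n
  | .neg φ => Nat.pair 1 (encodeT φ)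
  | .and φ ψ => Nat.pair 2 (Nat.pair (encodeT φ) (encodeT ψ))
  | .diaF φ => Nat.pair 3 (encodeT φ)
  | .exNe φ => Nat.pair 4 (encodeT φ)

/-- The set of codes of bimodal formulas with property `P`. -/
def BCodes (P : BForm → Prop) : ℕ → Prop := fun n => ∃ φ, encodeB φ = n ∧ P φ

/-- The set of codes of FOLTL≠-formulas with property `P`. -/
def TCodes (P : TForm → Prop) : ℕ → Prop := fun n => ∃ φ, encodeT φ = n ∧ P φ

/-! ## The analytical hierarchy: Σ₁¹ -/

/-- `A ⊆ ℕ` is `Σ₁¹`: in normal form `n ∈ A ↔ ∃ f : ℕ → ℕ, ∀ m, R (n, f̄(m))`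
for a computable predicate `R` of the number `n` and finite initial segments of `f`. -/
def Sigma11 (A : ℕ → Prop) : Prop :=
  ∃ R : ℕ × List ℕ → Prop, ComputablePred R ∧
    ∀ n, A n ↔ ∃ f : ℕ → ℕ, ∀ m, R (n, (List.range m).map f)

/-- `Σ₁¹`-hardness with respect to computable many-one reducibility. -/
def Sigma11Hard (A : ℕ → Prop) : Prop := ∀ B : ℕ → Prop, Sigma11 B → ManyOneReducible B A

/-- `Σ₁¹`-completeness. -/
def Sigma11Complete (A : ℕ → Prop) : Prop := Sigma11 A ∧ Sigma11Hard A

/-! ## Counter (Minsky) machines -/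

/-- Counter machine operations: `inl i` increments counter `i`, `inr (inl i)`
decrements counter `i`, `inr (inr i)` zero-tests counter `i`. -/
abbrev CMOp : Type := ℕ ⊕ ℕ ⊕ ℕ

def CMOp.counter : CMOp → ℕ
  | Sum.inl i => i
  | Sum.inr (Sum.inl i) => i
  | Sum.inr (Sum.inr i) => i

/-- Description of a counter machine: number `N` of counters, number of states
(states are `0,…,states-1`), list of terminal states, and list of instructions
`(q, op, q')`. -/
abbrev CMDesc : Type := ℕ × ℕ × List ℕ × List (ℕ × CMOp × ℕ)

/-- Well-formedness of a counter machine description: `N > 1`, terminal states are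
states, instructions are attached to non-terminal states and mention genuine
counters, and every non-terminal state has at least one instruction. -/
def CMWF (M : CMDesc) : Prop :=
  1 < M.1 ∧ (∀ q ∈ M.2.2.1, q < M.2.1) ∧
  (∀ t ∈ M.2.2.2, t.1 < M.2.1 ∧ t.1 ∉ M.2.2.1 ∧ t.2.2 < M.2.1 ∧ CMOp.counter t.2.1 < M.1) ∧
  (∀ q, q < M.2.1 → q ∉ M.2.2.1 → ∃ t ∈ M.2.2.2, t.1 = q)

/-- A configuration: current state and contents of the counters. -/
abbrev CMConfig : Type := ℕ × (ℕ → ℕ)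

/-- Reliable step of a counter machine. -/
def CMStep (M : CMDesc) (σ σ' : CMConfig) : Prop :=
  ∃ op q', (σ.1, op, q') ∈ M.2.2.2 ∧ σ'.1 = q' ∧
    match op with
    | Sum.inl i => σ'.2 i = σ.2 i + 1 ∧ ∀ j, j ≠ i → σ'.2 j = σ.2 j
    | Sum.inr (Sum.inl i) => 0 < σ.2 i ∧ σ'.2 i + 1 = σ.2 i ∧ ∀ j, j ≠ i → σ'.2 j = σ.2 j
    | Sum.inr (Sum.inr i) => σ.2 i = 0 ∧ ∀ j, σ'.2 j = σ.2 j

/-- Lossy step of a counter machine. -/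
def CMStepLossy (M : CMDesc) (σ σ' : CMConfig) : Prop :=
  ∃ c1 c2 : ℕ → ℕ, CMStep M (σ.1, c1) (σ'.1, c2) ∧ (∀ i, c1 i ≤ σ.2 i) ∧ (∀ i, σ'.2 i ≤ c2 i)

/-- The configuration `⟨q, 𝟎⟩` with all-0 counters. -/
def zeroConfig (q : ℕ) : CMConfig := (q, fun _ => 0)

/-- CM non-termination: the machine has an infinite run starting with `⟨q₀,𝟎⟩`. -/
def CMNonTerm : CMDesc × ℕ → Prop := fun p =>
  CMWF p.1 ∧ ∃ ρ : ℕ → CMConfig, ρ 0 = zeroConfig p.2 ∧ ∀ n, CMStep p.1 (ρ n) (ρ (n+1))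

/-- CM reachability: the machine has a run starting with `⟨q₀,𝟎⟩` reaching `q_r`. -/
def CMReach : CMDesc × ℕ × ℕ → Prop := fun p =>
  CMWF p.1 ∧ ∃ (B : ℕ) (ρ : ℕ → CMConfig), ρ 0 = zeroConfig p.2.1 ∧
    (∀ n, n < B → CMStep p.1 (ρ n) (ρ (n+1))) ∧ (ρ B).1 = p.2.2

/-- CM recurrence: the machine has an infinite run starting with `⟨q₀,𝟎⟩`
visiting `q_r` infinitely often. -/
def CMRecur : CMDesc × ℕ × ℕ → Prop := fun p =>
  CMWF p.1 ∧ ∃ ρ : ℕ → CMConfig, ρ 0 = zeroConfig p.2.1 ∧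
    (∀ n, CMStep p.1 (ρ n) (ρ (n+1))) ∧ ∀ n, ∃ m, n ≤ m ∧ (ρ m).1 = p.2.2

/-- LCM reachability: the machine has a lossy run starting with `⟨q₀,𝟎⟩`
reaching `q_r`. -/
def LCMReach : CMDesc × ℕ × ℕ → Prop := fun p =>
  CMWF p.1 ∧ ∃ (B : ℕ) (ρ : ℕ → CMConfig), ρ 0 = zeroConfig p.2.1 ∧
    (∀ n, n < B → CMStepLossy p.1 (ρ n) (ρ (n+1))) ∧ (ρ B).1 = p.2.2

/-- LCM ω-reachability: for every `k`, the machine has a lossy run starting with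
`⟨q₀,𝟎⟩` visiting `q_r` at least `k` times. -/
def LCMOmegaReach : CMDesc × ℕ × ℕ → Prop := fun p =>
  CMWF p.1 ∧ ∀ k : ℕ, ∃ (B : ℕ) (ρ : ℕ → CMConfig), ρ 0 = zeroConfig p.2.1 ∧
    (∀ n, n < B → CMStepLossy p.1 (ρ n) (ρ (n+1))) ∧
    k ≤ ((Finset.range (B+1)).filter (fun n => (ρ n).1 = p.2.2)).card

/-! ## Particular formulas used in the statements -/

/-- `□₁⁺□₀⁺(◇₀⊤ → □₁◇₀⊤) ∧ φ` (Prop. 2.4 of the paper). -/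
def diffDecForm (φ : BForm) : BForm :=
  BForm.and
    (BForm.boxP1 (BForm.boxP0
      (BForm.imp (BForm.dia0 BForm.top) (BForm.box1 (BForm.dia0 BForm.top))))) φ

/-- `D ∧ □₀^{≤n}□₁^{≤n}(◇₀D → D) ∧ φ^D`. -/
def decRelForm (d n : ℕ) (φ : BForm) : BForm :=
  BForm.and (BForm.var d)
    (BForm.and
      (BForm.boxLe0 n (BForm.boxLe1 n
        (BForm.imp (BForm.dia0 (BForm.var d)) (BForm.var d))))
      (BForm.relativize d φ))

/-- `D ∧ □₀^{≤n}□₁^{≤n}(D → □₀D) ∧ φ^D`. -/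
def expRelForm (d n : ℕ) (φ : BForm) : BForm :=
  BForm.and (BForm.var d)
    (BForm.and
      (BForm.boxLe0 n (BForm.boxLe1 n
        (BForm.imp (BForm.var d) (BForm.box0 (BForm.var d)))))
      (BForm.relativize d φ))

/-! ### Auxiliary material for STATEMENT 2 -/

/-- The axiom `◇₀⊤ → □₁◇₀⊤`. -/
private def psiAx : BForm :=
  BForm.imp (BForm.dia0 BForm.top) (BForm.box1 (BForm.dia0 BForm.top))

private lemma bsat_imp {W : Type} {R0 R1 : W → W → Prop} {val : ℕ → W → Prop} {w : W}
    {φ ψ : BForm} :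
    BSat R0 R1 val w (BForm.imp φ ψ) ↔ (BSat R0 R1 val w φ → BSat R0 R1 val w ψ) := by
  simp [BForm.imp, BSat]

private lemma bsat_top {W : Type} {R0 R1 : W → W → Prop} {val : ℕ → W → Prop} {w : W} :
    BSat R0 R1 val w BForm.top := by
  intro h
  exact h.2 h.1

private lemma bsat_box0 {W : Type} {R0 R1 : W → W → Prop} {val : ℕ → W → Prop} {w : W}
    {φ : BForm} :
    BSat R0 R1 val w (BForm.box0 φ) ↔ ∀ v, R0 w v → BSat R0 R1 val v φ := by
  simp [BForm.box0, BSat]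

private lemma bsat_box1 {W : Type} {R0 R1 : W → W → Prop} {val : ℕ → W → Prop} {w : W}
    {φ : BForm} :
    BSat R0 R1 val w (BForm.box1 φ) ↔ ∀ v, R1 w v → BSat R0 R1 val v φ := by
  simp [BForm.box1, BSat]

/-- Any finite nonempty set has a maximal element with respect to a transitive
irreflexive relation. -/
private lemma exists_max_of_finite {α : Type} (R : α → α → Prop)
    (htr : ∀ x y z, R x y → R y z → R x z) (hirr : ∀ x, ¬ R x x)
    (A : Set α) (hfin : A.Finite) (hne : A.Nonempty) :
    ∃ z ∈ A, ∀ z' ∈ A, ¬ R z z' := by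
  by_contra hcon
  push_neg at hcon
  have hstep' : ∀ z : A, ∃ z' : A, R z.1 z'.1 := by
    intro z
    obtain ⟨z', hz', hr⟩ := hcon z.1 z.2
    exact ⟨⟨z', hz'⟩, hr⟩
  choose f hf using hstep'
  obtain ⟨a0, ha0⟩ := hne
  have hFA : Finite A := hfin
  set x : ℕ → A := fun n => f^[n] ⟨a0, ha0⟩ with hx
  have hstep : ∀ n, R (x n).1 (x (n+1)).1 := by
    intro n
    have h1 : x (n+1) = f (x n) := by
      simp [hx, Function.iterate_succ_apply']
    rw [h1]
    exact hf (x n)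
  have hchain : ∀ m n, m < n → R (x m).1 (x n).1 := by
    intro m n hmn
    induction n with
    | zero => omega
    | succ k ih =>
      rcases Nat.lt_succ_iff_lt_or_eq.mp hmn with h' | h'
      · exact htr _ _ _ (ih h') (hstep k)
      · subst h'; exact hstep m
  have hinj : Function.Injective x := by
    intro m n hmn
    by_contra hne'
    rcases lt_or_gt_of_ne hne' with h' | h'
    · have h2 := hchain m n h'
      rw [hmn] at h2
      exact hirr _ h2
    · have h2 := hchain n m h'
      rw [hmn] at h2
      exact hirr _ h2
  have : Finite ℕ := Finite.of_injective x hinj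
  exact not_finite ℕ

/-- Truth transfer between a product model and the corresponding two-dimensional
frame with constant (universal) fibers. -/
private lemma prod_to_dec {A D : Type} (R : A → A → Prop) (hA : Nonempty A) (d : D)
    (val : ℕ → A × D → Prop) :
    ∀ (ψ : BForm) (p : A × D),
      BSat (TwoFrame.Rh ⟨A, R, hA, D, fun _ => Set.univ, fun _ a b => a ≠ b,
              fun _ => ⟨d, Set.mem_univ d⟩⟩)
           (TwoFrame.Rv ⟨A, R, hA, D, fun _ => Set.univ, fun _ a b => a ≠ b,
              fun _ => ⟨d, Set.mem_univ d⟩⟩)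
           (fun n q => val n q.1) ⟨p, Set.mem_univ p.2⟩ ψ
      ↔ BSat (prodR0 R) (prodR1 (fun a b : D => a ≠ b)) val p ψ := by
  intro ψ
  induction ψ with
  | var n =>
    intro p
    exact Iff.rfl
  | neg ψ ih =>
    intro p
    simp only [BSat]
    exact not_congr (ih p)
  | and ψ χ ih1 ih2 =>
    intro p
    simp only [BSat]
    exact and_congr (ih1 p) (ih2 p)
  | dia0 ψ ih =>
    intro p
    simp only [BSat]
    constructor
    · rintro ⟨⟨q, hq⟩, hr, hs⟩
      exact ⟨q, hr, (ih q).mp hs⟩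
    · rintro ⟨q, hr, hs⟩
      exact ⟨⟨q, Set.mem_univ q.2⟩, hr, (ih q).mpr hs⟩
  | dia1 ψ ih =>
    intro p
    simp only [BSat]
    constructor
    · rintro ⟨⟨q, hq⟩, hr, hs⟩
      exact ⟨q, hr, (ih q).mp hs⟩
    · rintro ⟨q, hr, hs⟩
      exact ⟨⟨q, Set.mem_univ q.2⟩, hr, (ih q).mpr hs⟩

/-- The axiom `□₁⁺□₀⁺(◇₀⊤ → □₁◇₀⊤)` is valid in any product with a difference frame. -/
private lemma prod_ax {A D : Type} (R : A → A → Prop) (val : ℕ → A × D → Prop) (p : A × D) :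
    BSat (prodR0 R) (prodR1 (fun a b : D => a ≠ b)) val p
      (BForm.boxP1 (BForm.boxP0 psiAx)) := by
  have hψ : ∀ q : A × D,
      BSat (prodR0 R) (prodR1 (fun a b : D => a ≠ b)) val q psiAx := by
    intro q
    rw [psiAx, bsat_imp]
    rintro ⟨r, ⟨hr, _⟩, _⟩
    rw [bsat_box1]
    rintro q' ⟨heq, _⟩
    exact ⟨(r.1, q'.2), ⟨heq ▸ hr, rfl⟩, bsat_top⟩
  exact ⟨⟨hψ p, bsat_box0.mpr fun q _ => hψ q⟩,
    bsat_box1.mpr fun q _ => ⟨hψ q, bsat_box0.mpr fun r _ => hψ r⟩⟩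

/-- Truth transfer between a decreasing two-dimensional model with constant domains
on the cone above `x₀` and the corresponding product model. -/
private lemma dec_transfer (T : TwoFrame) (hdiff : T.DiffFibers) (x₀ : T.H)
    (htr : ∀ x y z, T.R x y → T.R y z → T.R x z)
    (hconst : ∀ x, (x = x₀ ∨ T.R x₀ x) → T.D x = T.D x₀)
    (val : ℕ → T.Worlds → Prop) :
    ∀ (ψ : BForm) (x : T.H) (hx : x = x₀ ∨ T.R x₀ x) (v : T.V) (hv : v ∈ T.D x)
      (hv0 : v ∈ T.D x₀),
      BSat (prodR0 T.R) (prodR1 (fun a b : {a : T.V // a ∈ T.D x₀} => a ≠ b))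
        (fun n p => ∃ h : p.2.1 ∈ T.D p.1, val n ⟨⟨p.1, p.2.1⟩, h⟩)
        (x, ⟨v, hv0⟩) ψ
      ↔ BSat T.Rh T.Rv val ⟨⟨x, v⟩, hv⟩ ψ := by
  intro ψ
  induction ψ with
  | var n =>
    intro x hx v hv hv0
    constructor
    · rintro ⟨h, hval⟩
      exact hval
    · intro hval
      exact ⟨hv, hval⟩
  | neg ψ ih =>
    intro x hx v hv hv0
    simp only [BSat]
    exact not_congr (ih x hx v hv hv0)
  | and ψ χ ih1 ih2 =>
    intro x hx v hv hv0
    simp only [BSat]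
    exact and_congr (ih1 x hx v hv hv0) (ih2 x hx v hv hv0)
  | dia0 ψ ih =>
    intro x hx v hv hv0
    simp only [BSat]
    constructor
    · rintro ⟨⟨y, u⟩, ⟨hR, hequ⟩, hs⟩
      have hequ' : (⟨v, hv0⟩ : {a : T.V // a ∈ T.D x₀}) = u := hequ
      subst hequ'
      have hy : y = x₀ ∨ T.R x₀ y :=
        Or.inr (hx.elim (fun h => h ▸ hR) (fun h => htr _ _ _ h hR))
      have hvy : v ∈ T.D y := (hconst y hy).symm ▸ hv0
      exact ⟨⟨⟨y, v⟩, hvy⟩, ⟨hR, rfl⟩, (ih y hy v hvy hv0).mp hs⟩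
    · rintro ⟨⟨⟨y, u⟩, hu⟩, ⟨hR, hequ⟩, hs⟩
      have hequ' : v = u := hequ
      subst hequ'
      have hy : y = x₀ ∨ T.R x₀ y :=
        Or.inr (hx.elim (fun h => h ▸ hR) (fun h => htr _ _ _ h hR))
      exact ⟨(y, ⟨v, hv0⟩), ⟨hR, rfl⟩, (ih y hy v hu hv0).mpr hs⟩
  | dia1 ψ ih =>
    intro x hx v hv hv0
    simp only [BSat]
    constructor
    · rintro ⟨⟨y, u⟩, ⟨heq, hne⟩, hs⟩
      have heq' : x = y := heq
      subst heq'
      have hu : u.1 ∈ T.D x := (hconst x hx).symm ▸ u.2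
      have hvne : v ≠ u.1 := fun h => hne (Subtype.ext h)
      exact ⟨⟨⟨x, u.1⟩, hu⟩, ⟨rfl, (hdiff x v hv u.1 hu).mpr hvne⟩,
        (ih x hx u.1 hu u.2).mp hs⟩
    · rintro ⟨⟨⟨y, u⟩, hu⟩, ⟨heq, hS⟩, hs⟩
      have heq' : x = y := heq
      subst heq'
      have hu0 : u ∈ T.D x₀ := (hconst x hx) ▸ hu
      have hvne : v ≠ u := (hdiff x v hv u hu).mp hS
      exact ⟨(x, ⟨u, hu0⟩), ⟨rfl, fun h => hvne (congrArg Subtype.val h)⟩,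
        (ih x hx u hu hu0).mpr hs⟩

/-- For `C` the singleton class `{⟨ω,<⟩}` or the class of all finite
linear orders: `φ` is satisfiable in a product of a member of `C` with a difference
frame iff `□₁⁺□₀⁺(◇₀⊤ → □₁◇₀⊤) ∧ φ` is satisfiable in a decreasing 2-frame with
horizontal frame in `C` and all vertical frames difference frames. -/
theorem prod_sat_iff_decreasing_sat (C : Frame → Prop)
    (hC : C = IsOmegaFrame ∨ C = IsFinLinFrame) (φ : BForm) :
    ProdDiffSat C φ ↔ DecDiffSat C (diffDecForm φ) := by
  have hprops : ∀ F : Frame, C F → IsLin F.R ∧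
      ∀ x y : F.W, F.R x y → ({z : F.W | F.R x z ∧ F.R z y}).Finite := by
    rcases hC with rfl | rfl
    · rintro F ⟨e, he⟩
      constructor
      · refine ⟨fun a ha => ?_, fun a b c hab hbc => ?_, fun a b => ?_⟩
        · exact lt_irrefl _ ((he a a).mp ha)
        · exact (he a c).mpr (lt_trans ((he a b).mp hab) ((he b c).mp hbc))
        · rcases lt_trichotomy (e a) (e b) with h | h | h
          · exact Or.inl ((he a b).mpr h)
          · exact Or.inr (Or.inl (e.injective h))
          · exact Or.inr (Or.inr ((he b a).mpr h))
      · intro x y _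
        have hset : {z : F.W | F.R x z ∧ F.R z y} = ⇑e ⁻¹' (Set.Ioo (e x) (e y)) := by
          ext z
          simp only [Set.mem_setOf_eq, Set.mem_preimage, Set.mem_Ioo, he]
        rw [hset]
        exact Set.Finite.preimage (Function.Injective.injOn e.injective) (Set.finite_Ioo _ _)
    · rintro F ⟨hfin, hlin⟩
      have : Finite F.W := hfin
      exact ⟨hlin, fun x y _ => Set.toFinite _⟩
  constructor
  · -- product satisfiability implies decreasing satisfiability
    rintro ⟨F, hF, D, ⟨d⟩, val, p₀, hsat⟩
    refine ⟨⟨F.W, F.R, F.ne, D, fun _ => Set.univ, fun _ a b => a ≠ b,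
      fun _ => ⟨d, Set.mem_univ d⟩⟩, hF,
      fun x y _ => ⟨fun a h => h, fun a _ b _ => Iff.rfl⟩,
      fun x a _ b _ => Iff.rfl,
      (fun n q => val n q.1), ⟨p₀, Set.mem_univ p₀.2⟩, ?_, ?_⟩
    · exact (prod_to_dec F.R F.ne d val (BForm.boxP1 (BForm.boxP0 psiAx)) p₀).mpr
        (prod_ax F.R val p₀)
    · exact (prod_to_dec F.R F.ne d val φ p₀).mpr hsat
  · -- decreasing satisfiability implies product satisfiability
    rintro ⟨T, hF, hdec, hdiff, val, w, hsat⟩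
    obtain ⟨⟨hirr, htr, htri⟩, hfin⟩ := hprops T.horiz hF
    obtain ⟨⟨x₀, v₀⟩, hv₀⟩ := w
    have hax : BSat T.Rh T.Rv val ⟨⟨x₀, v₀⟩, hv₀⟩ (BForm.boxP1 (BForm.boxP0 psiAx)) :=
      hsat.1
    have hφ : BSat T.Rh T.Rv val ⟨⟨x₀, v₀⟩, hv₀⟩ φ := hsat.2
    have hψw : BSat T.Rh T.Rv val ⟨⟨x₀, v₀⟩, hv₀⟩ psiAx := hax.1.1
    have hbox0w := hax.1.2
    have hbox1w := hax.2
    replace hbox0w := bsat_box0.mp hbox0w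
    replace hbox1w := bsat_box1.mp hbox1w
    -- the axiom holds at every point of the cone above x₀
    have hψat : ∀ x, (x = x₀ ∨ T.R x₀ x) → ∀ v, ∀ hv : v ∈ T.D x,
        BSat T.Rh T.Rv val ⟨⟨x, v⟩, hv⟩ psiAx := by
      intro x hx v hv
      rcases hx with rfl | hx
      · by_cases hvv : v = v₀
        · subst hvv
          exact hψw
        · have hS : T.S x v₀ v := (hdiff x v₀ hv₀ v hv).mpr (Ne.symm hvv)
          exact (hbox1w ⟨⟨x, v⟩, hv⟩ ⟨rfl, hS⟩).1
      · by_cases hvv : v = v₀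
        · subst hvv
          exact hbox0w ⟨⟨x, v⟩, hv⟩ ⟨hx, rfl⟩
        · have hv0' : v ∈ T.D x₀ := (hdec x₀ x hx).1 hv
          have hS : T.S x₀ v₀ v := (hdiff x₀ v₀ hv₀ v hv0').mpr (Ne.symm hvv)
          have hb0 := (hbox1w ⟨⟨x₀, v⟩, hv0'⟩ ⟨rfl, hS⟩).2
          replace hb0 := bsat_box0.mp hb0
          exact hb0 ⟨⟨x, v⟩, hv⟩ ⟨hx, rfl⟩
    -- survival: every element alive at a non-final cone point survives past it
    have hsurv : ∀ x, (x = x₀ ∨ T.R x₀ x) → ∀ y, T.R x y → ∀ v, v ∈ T.D x →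
        ∃ z, T.R x z ∧ v ∈ T.D z := by
      intro x hx y hy v hv
      obtain ⟨u, hu⟩ := T.Dne y
      have hux : u ∈ T.D x := (hdec x y hy).1 hu
      by_cases huv : u = v
      · exact ⟨y, hy, huv ▸ hu⟩
      · have hψ := hψat x hx u hux
        replace hψ := bsat_imp.mp hψ
        have hpre : BSat T.Rh T.Rv val ⟨⟨x, u⟩, hux⟩ (BForm.dia0 BForm.top) :=
          ⟨⟨⟨y, u⟩, hu⟩, ⟨hy, rfl⟩, bsat_top⟩
        have hb1 := hψ hpre
        replace hb1 := bsat_box1.mp hb1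
        have hS : T.S x u v := (hdiff x u hux v hv).mpr huv
        obtain ⟨⟨⟨z, uz⟩, huz⟩, ⟨hrz, heq⟩, _⟩ := hb1 ⟨⟨x, v⟩, hv⟩ ⟨rfl, hS⟩
        have heq' : v = uz := heq
        exact ⟨z, hrz, heq' ▸ huz⟩
    -- domains do not shrink along the cone
    have hmono : ∀ x, (x = x₀ ∨ T.R x₀ x) → ∀ y, T.R x y → T.D x ⊆ T.D y := by
      intro x hx y hxy v hv
      by_contra hvy
      have hAfin : ({z : T.H | (z = x ∨ T.R x z) ∧ T.R z y ∧ v ∈ T.D z}).Finite := by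
        apply Set.Finite.subset (Set.Finite.union (Set.finite_singleton x) (hfin x y hxy))
        rintro z ⟨hz1, hz2, _⟩
        rcases hz1 with rfl | hz1
        · exact Or.inl rfl
        · exact Or.inr ⟨hz1, hz2⟩
      have hAne : ({z : T.H | (z = x ∨ T.R x z) ∧ T.R z y ∧ v ∈ T.D z}).Nonempty :=
        ⟨x, Or.inl rfl, hxy, hv⟩
      obtain ⟨z, ⟨hz1, hz2, hz3⟩, hmax⟩ :=
        exists_max_of_finite T.R htr hirr _ hAfin hAne
      have hzcone : z = x₀ ∨ T.R x₀ z := by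
        rcases hz1 with rfl | h1
        · exact hx
        · rcases hx with rfl | h2
          · exact Or.inr h1
          · exact Or.inr (htr _ _ _ h2 h1)
      obtain ⟨z', hzz', hvz'⟩ := hsurv z hzcone y hz2 v hz3
      rcases htri z' y with h | h | h
      · exact hmax z' ⟨Or.inr (hz1.elim (fun e => e ▸ hzz') (fun h' => htr _ _ _ h' hzz')),
          h, hvz'⟩ hzz'
      · exact hvy (h ▸ hvz')
      · exact hvy ((hdec y z' h).1 hvz')
    -- constant domains on the cone
    have hconst : ∀ x, (x = x₀ ∨ T.R x₀ x) → T.D x = T.D x₀ := by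
      intro x hx
      rcases hx with rfl | hx
      · rfl
      · exact Set.Subset.antisymm ((hdec x₀ x hx).1) (hmono x₀ (Or.inl rfl) x hx)
    exact ⟨T.horiz, hF, {a : T.V // a ∈ T.D x₀}, ⟨⟨v₀, hv₀⟩⟩,
      (fun n p => ∃ h : p.2.1 ∈ T.D p.1, val n ⟨⟨p.1, p.2.1⟩, h⟩), (x₀, ⟨v₀, hv₀⟩),
      (dec_transfer T hdiff x₀ htr hconst val φ x₀ (Or.inl rfl) v₀ hv₀ hv₀).mpr hφ⟩

end HK
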